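/- Let A, B : X → ℝ be functions on a set X with B ≥ 0, and for λ ∈ [δ₀,1] set f_λ = A − λB and c_λ = inf_{γ∈Γ} sup_{t∈[0,1]} f_λ(γ(t)) over a fixed nonempty family Γ of paths, assuming each sup is finite. Suppose moreover that for each γ ∈ Γ, sup_t B(γ(t)) < ∞. Then λ ↦ c_λ is continuous from the left on (δ₀, 1]. -/

import Mathlib

open Set Filter Topology unitInterval

/-- Left continuity of the minimax levels: if `f_λ = A - λB` with `B ≥ 0` bounded along
each path of `Γ` (and `A` bounded above along each path, so each sup is finite), then
`λ ↦ c_λ` is continuous from the left on `(δ₀, 1]`. -/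
theorem stmt4 {X : Type*} [NormedAddCommGroup X] [NormedSpace ℝ X]
    (A B : X → ℝ) (hB : ∀ u : X, 0 ≤ B u)
    (δ₀ : ℝ) (hδ₀ : 0 < δ₀) (hδ₀1 : δ₀ < 1)
    (w : X) (Γ : Set C(unitInterval, X))
    (hΓ : Γ = {γ : C(unitInterval, X) | γ 0 = 0 ∧ γ 1 = w})
    (hΓne : Γ.Nonempty)
    (hAbdd : ∀ γ ∈ Γ, BddAbove (Set.range fun t : unitInterval => A (γ t)))
    (hBbdd : ∀ γ ∈ Γ, BddAbove (Set.range fun t : unitInterval => B (γ t)))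
    (c : ℝ → EReal)
    (hc : ∀ lam : ℝ, c lam = ⨅ γ ∈ Γ, ⨆ t : unitInterval, ((A (γ t) - lam * B (γ t) : ℝ) : EReal)) :
    ∀ lam : ℝ, lam ∈ Ioc δ₀ 1 →
      Tendsto c (nhdsWithin lam (Iio lam)) (nhds (c lam)) := by
  intro lam hlam
  have hlam0 : (0:ℝ) < lam := hδ₀.trans hlam.1
  -- Antitonicity of `c`: for `μ ≤ lam`, `c lam ≤ c μ`.
  have hmono : ∀ μ : ℝ, μ ≤ lam → c lam ≤ c μ := by
    intro μ hμ
    rw [hc, hc]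
    refine iInf_mono fun γ => iInf_mono fun hγ => iSup_mono fun t => ?_
    have h1 : A (γ t) - lam * B (γ t) ≤ A (γ t) - μ * B (γ t) := by
      have := mul_le_mul_of_nonneg_right hμ (hB (γ t))
      linarith
    exact_mod_cast h1
  rw [tendsto_order]
  constructor
  · intro a ha
    filter_upwards [self_mem_nhdsWithin] with μ hμ
    exact ha.trans_le (hmono μ (le_of_lt hμ))
  · intro a ha
    -- pick a path nearly attaining the infimum
    rw [hc] at ha
    obtain ⟨γ, hγa⟩ := iInf_lt_iff.1 ha
    obtain ⟨hγΓ, hγa⟩ := iInf_lt_iff.1 hγa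
    set S : EReal := ⨆ t : unitInterval, ((A (γ t) - lam * B (γ t) : ℝ) : EReal) with hSdef
    -- bounds along the path
    obtain ⟨MA, hMA⟩ := hAbdd γ hγΓ
    obtain ⟨M, hM⟩ := hBbdd γ hγΓ
    have hM0 : (0:ℝ) ≤ M := (hB (γ 0)).trans (hM ⟨0, rfl⟩)
    -- S is finite
    have hSbot : (⊥ : EReal) < S := by
      refine lt_of_lt_of_le ?_ (le_iSup (fun t : unitInterval =>
        ((A (γ t) - lam * B (γ t) : ℝ) : EReal)) (0 : unitInterval))
      exact EReal.bot_lt_coe _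
    have hStop : S < ⊤ := by
      refine lt_of_le_of_lt (iSup_le fun t => ?_) (EReal.coe_lt_top MA)
      have h1 : A (γ t) - lam * B (γ t) ≤ MA := by
        have h2 : A (γ t) ≤ MA := hMA ⟨t, rfl⟩
        have h3 : 0 ≤ lam * B (γ t) := mul_nonneg hlam0.le (hB (γ t))
        linarith
      exact_mod_cast h1
    lift S to ℝ using ⟨hStop.ne, hSbot.ne'⟩ with s hs
    obtain ⟨r, hsr, hra⟩ := EReal.exists_between_coe_real hγa
    have hsr' : s < r := by exact_mod_cast hsr
    set η : ℝ := (r - s) / (M + 1) with hηdef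
    have hη0 : 0 < η := div_pos (by linarith) (by linarith)
    have hmem : Ioo (lam - η) lam ∈ 𝓝[<] lam :=
      Ioo_mem_nhdsLT_of_mem ⟨by linarith, le_refl lam⟩
    filter_upwards [hmem] with μ hμ
    have hcμ : c μ ≤ ⨆ t : unitInterval, ((A (γ t) - μ * B (γ t) : ℝ) : EReal) := by
      rw [hc]
      exact iInf₂_le γ hγΓ
    have hsup : (⨆ t : unitInterval, ((A (γ t) - μ * B (γ t) : ℝ) : EReal))
        ≤ ((s + (lam - μ) * M : ℝ) : EReal) := by
      refine iSup_le fun t => ?_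
      have h1 : A (γ t) - lam * B (γ t) ≤ s := by
        have := le_iSup (fun t : unitInterval =>
          ((A (γ t) - lam * B (γ t) : ℝ) : EReal)) t
        rw [← hSdef] at this
        exact_mod_cast this
      have h2 : (lam - μ) * B (γ t) ≤ (lam - μ) * M :=
        mul_le_mul_of_nonneg_left (hM ⟨t, rfl⟩) (by linarith [hμ.2])
      have h3 : A (γ t) - μ * B (γ t) ≤ s + (lam - μ) * M := by nlinarith
      exact_mod_cast h3
    have hfin : (s + (lam - μ) * M : ℝ) < r := by
      have h4 : lam - μ < η := by linarith [hμ.1]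
      have h5 : (lam - μ) * M ≤ η * M :=
        mul_le_mul_of_nonneg_right h4.le hM0
      have h6 : η * (M + 1) = r - s := by
        rw [hηdef]; exact div_mul_cancel₀ _ (ne_of_gt (by linarith))
      nlinarith
    calc c μ ≤ ((s + (lam - μ) * M : ℝ) : EReal) := hcμ.trans hsup
      _ < (r : EReal) := by exact_mod_cast hfin
      _ < a := hra
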